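/- Let μ be a finite Borel measure on ℝ^d supported on a set E, such that liminf_{r→0} μ(B(x,r))/r^n ≤ C_* for all x ∈ E, and fix Λ > 2. Then for μ-a.e. x ∈ E there exists a sequence r_k → 0 with μ(B(x, Λ r_k)) ≤ 2Λ^d μ(B(x, r_k)) and μ(B(x, r_k)) ≤ 10 C_* Λ^n r_k^n. -/

import Mathlib

open MeasureTheory Metric Filter ENNReal

/-- The support of a measure: points all of whose balls have positive measure. -/
def measSupp {d : ℕ} (μ : Measure (EuclideanSpace ℝ (Fin d))) : Set (EuclideanSpace ℝ (Fin d)) :=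
  {x | ∀ r : ℝ, 0 < r → 0 < μ (Metric.ball x r)}

/-- If at every point of `A` there are small balls of measure `≤ δ r^d` for every `δ`, then
`A` is null. Proved via the Vitali covering lemma and comparison with Lebesgue measure. -/
lemma null_of_small_balls {d : ℕ} (μ : Measure (EuclideanSpace ℝ (Fin d))) (A : Set (EuclideanSpace ℝ (Fin d)))
    (h : ∀ x ∈ A, ∀ δ : ℝ, 0 < δ → ∃ r : ℝ, 0 < r ∧ r < 1 ∧
      μ (Metric.closedBall x (5 * r)) ≤ ENNReal.ofReal (δ * r ^ d)) :
    μ A = 0 := by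
  classical
  have hcover : A ⊆ ⋃ R : ℕ, A ∩ ball (0 : EuclideanSpace ℝ (Fin d)) R := by
    intro x hx
    obtain ⟨R, hR⟩ := exists_nat_gt (dist x 0)
    exact Set.mem_iUnion.2 ⟨R, hx, by simpa [mem_ball] using hR⟩
  refine measure_mono_null hcover (measure_iUnion_null fun R => ?_)
  set c := volume (ball (0 : EuclideanSpace ℝ (Fin d)) 1) with hc
  have hc0 : c ≠ 0 := (measure_ball_pos _ _ one_pos).ne'
  have hctop : c ≠ ⊤ := measure_ball_lt_top.ne
  set V := volume (ball (0 : EuclideanSpace ℝ (Fin d)) (R + 1)) with hV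
  have hVtop : V ≠ ⊤ := measure_ball_lt_top.ne
  set S := A ∩ ball (0 : EuclideanSpace ℝ (Fin d)) R with hS
  have key : ∀ δ : ℝ, 0 < δ → μ S ≤ ENNReal.ofReal δ * (V / c) := by
    intro δ hδ
    have hch : ∀ x ∈ S, ∃ r : ℝ, 0 < r ∧ r < 1 ∧
        μ (Metric.closedBall x (5 * r)) ≤ ENNReal.ofReal (δ * r ^ d) :=
      fun x hx => h x hx.1 δ hδ
    choose! r hr0 hr1 hrμ using hch
    obtain ⟨u, hut, hdisj, hcov⟩ := Vitali.exists_disjoint_subfamily_covering_enlargement_closedBall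
      S id r 1 (fun a ha => (hr1 a ha).le) 5 (by norm_num)
    have hucnt : u.Countable := by
      apply hdisj.countable_of_nonempty_interior
      intro b hb
      exact ⟨b, mem_interior_iff_mem_nhds.2 (closedBall_mem_nhds _ (hr0 b (hut hb)))⟩
    have hSsub : S ⊆ ⋃ b ∈ u, Metric.closedBall b (5 * r b) := by
      intro a ha
      obtain ⟨b, hbu, hsub⟩ := hcov a ha
      exact Set.mem_iUnion₂.2 ⟨b, hbu, hsub (mem_closedBall_self (hr0 a ha).le)⟩
    have hvol : ∀ b ∈ u, volume (Metric.closedBall (b : EuclideanSpace ℝ (Fin d)) (r b)) =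
        ENNReal.ofReal (r b ^ d) * c := by
      intro b hb
      rw [hc, Measure.addHaar_closedBall _ b (hr0 b (hut hb)).le, finrank_euclideanSpace_fin]
    have hsubball : ∀ b ∈ u, Metric.closedBall (b : EuclideanSpace ℝ (Fin d)) (r b) ⊆
        ball (0 : EuclideanSpace ℝ (Fin d)) (R + 1) := by
      intro b hb
      apply closedBall_subset_ball'
      have hbS : b ∈ S := hut hb
      have : dist b (0 : EuclideanSpace ℝ (Fin d)) < R := by simpa [mem_ball] using hbS.2
      have := hr1 b hbS
      linarith
    have hmul : μ S * c ≤ ENNReal.ofReal δ * V := by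
      calc μ S * c ≤ (∑' b : u, μ (Metric.closedBall b (5 * r b))) * c := by
            gcongr
            exact (measure_mono hSsub).trans (measure_biUnion_le μ hucnt _)
        _ ≤ (∑' b : u, ENNReal.ofReal δ * ENNReal.ofReal (r b ^ d)) * c := by
            gcongr with b
            rw [← ENNReal.ofReal_mul hδ.le]
            exact hrμ b (hut b.2)
        _ = ENNReal.ofReal δ * ∑' b : u, (ENNReal.ofReal (r b ^ d) * c) := by
            rw [ENNReal.tsum_mul_left, ENNReal.tsum_mul_right, mul_assoc]
        _ = ENNReal.ofReal δ * ∑' b : u, volume (Metric.closedBall (b : EuclideanSpace ℝ (Fin d)) (r b)) := by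
            congr 1
            exact (tsum_congr fun b => (hvol b b.2).symm)
        _ = ENNReal.ofReal δ *
              volume (⋃ b ∈ u, Metric.closedBall (b : EuclideanSpace ℝ (Fin d)) (r b)) := by
            congr 1
            exact (measure_biUnion hucnt hdisj fun b _ => measurableSet_closedBall).symm
        _ ≤ ENNReal.ofReal δ * V := by
            gcongr
            rw [hV]
            exact measure_mono (Set.iUnion₂_subset hsubball)
    rw [← mul_div_assoc, ENNReal.le_div_iff_mul_le (Or.inl hc0) (Or.inl hctop)]
    exact hmul
  have htend : Tendsto (fun δ : ℝ => ENNReal.ofReal δ * (V / c)) (nhdsWithin 0 (Set.Ioi 0))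
      (nhds 0) := by
    have h1 : Tendsto (fun δ : ℝ => ENNReal.ofReal δ) (nhdsWithin 0 (Set.Ioi 0)) (nhds 0) := by
      have h0 : Tendsto (fun δ : ℝ => δ) (nhdsWithin (0:ℝ) (Set.Ioi 0)) (nhds 0) :=
        tendsto_id.mono_left nhdsWithin_le_nhds
      simpa using ENNReal.tendsto_ofReal h0
    have h2 := ENNReal.Tendsto.mul_const h1
      (Or.inr (ENNReal.div_lt_top hVtop hc0).ne)
    simpa using h2
  have : μ S ≤ 0 := by
    refine ge_of_tendsto htend ?_
    filter_upwards [self_mem_nhdsWithin] with δ hδ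
    exact key δ hδ
  exact le_antisymm this (zero_le)

/-- Scales of small `n`-density exist arbitrarily small at points where the liminf density
is at most `Cstar`. -/
lemma exists_small_scale {d n : ℕ} (μ : Measure (EuclideanSpace ℝ (Fin d))) {Cstar : ℝ}
    (hC : 0 < Cstar) {x : EuclideanSpace ℝ (Fin d)}
    (hx : liminf (fun r : ℝ => μ (Metric.ball x r) / ENNReal.ofReal (r ^ n))
      (nhdsWithin 0 (Set.Ioi 0)) ≤ ENNReal.ofReal Cstar) :
    ∀ ε : ℝ, 0 < ε → ∃ r : ℝ, 0 < r ∧ r < ε ∧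
      μ (Metric.ball x r) ≤ ENNReal.ofReal (2 * Cstar * r ^ n) := by
  intro ε hε
  have hlt : liminf (fun r : ℝ => μ (Metric.ball x r) / ENNReal.ofReal (r ^ n))
      (nhdsWithin 0 (Set.Ioi 0)) < ENNReal.ofReal (2 * Cstar) :=
    lt_of_le_of_lt hx (by rw [ENNReal.ofReal_lt_ofReal_iff (by linarith)]; linarith)
  have hfreq := Filter.frequently_lt_of_liminf_lt (by isBoundedDefault) hlt
  rw [Filter.frequently_iff] at hfreq
  obtain ⟨r, hrU, hr⟩ := hfreq (Ioo_mem_nhdsGT_of_mem ⟨le_refl (0:ℝ), hε⟩)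
  refine ⟨r, hrU.1, hrU.2, ?_⟩
  have hrpos : 0 < r := hrU.1
  have h0 : ENNReal.ofReal (r ^ n) ≠ 0 := by
    simp [ENNReal.ofReal_eq_zero, not_le, pow_pos hrpos n]
  rw [ENNReal.div_lt_iff (Or.inl h0) (Or.inl ENNReal.ofReal_ne_top)] at hr
  calc μ (Metric.ball x r) ≤ ENNReal.ofReal (2 * Cstar) * ENNReal.ofReal (r ^ n) := hr.le
    _ = ENNReal.ofReal (2 * Cstar * r ^ n) := (ENNReal.ofReal_mul (by linarith)).symm

/-- The downward walk: if at every sufficiently small scale with controlled density doubling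
fails, then the measure of balls decays geometrically along the scales `s / Λ^j`. -/
lemma walk_decay {d n : ℕ} (hnd : n ≤ d) (μ : Measure (EuclideanSpace ℝ (Fin d)))
    {Cstar Λ ε s : ℝ} (hC : 0 < Cstar) (hΛ : 2 < Λ) (hs0 : 0 < s) (hsε : s < ε)
    (x : EuclideanSpace ℝ (Fin d))
    (hbad : ∀ ρ : ℝ, 0 < ρ → ρ < ε →
      μ (Metric.ball x ρ) ≤ ENNReal.ofReal (10 * Cstar * Λ ^ n * ρ ^ n) →
      ENNReal.ofReal (2 * Λ ^ d) * μ (Metric.ball x ρ) < μ (Metric.ball x (Λ * ρ)))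
    (hstart : μ (Metric.ball x s) ≤ ENNReal.ofReal (2 * Cstar * s ^ n)) :
    ∀ j : ℕ, μ (Metric.ball x (s / Λ ^ j)) ≤ ENNReal.ofReal (2 * Cstar * (s / Λ ^ j) ^ n) ∧
      ENNReal.ofReal ((2 * Λ ^ d) ^ j) * μ (Metric.ball x (s / Λ ^ j)) ≤ μ (Metric.ball x s) := by
  have hΛ0 : (0:ℝ) < Λ := by linarith
  have hΛ1 : (1:ℝ) < Λ := by linarith
  intro j
  induction j with
  | zero => simpa using hstart
  | succ j ih =>
    set ρ := s / Λ ^ (j + 1) with hρ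
    have hρ0 : 0 < ρ := div_pos hs0 (pow_pos hΛ0 _)
    have hρle : ρ ≤ s / Λ ^ j := by
      apply div_le_div_of_nonneg_left hs0.le (pow_pos hΛ0 _)
      exact pow_le_pow_right₀ hΛ1.le (Nat.le_succ j)
    have hρε : ρ < ε := by
      have h5 : ρ ≤ s := div_le_self hs0.le (one_le_pow₀ hΛ1.le)
      linarith
    have hΛρ : Λ * ρ = s / Λ ^ j := by
      rw [hρ]
      field_simp
      ring
    have hpown : (s / Λ ^ j) ^ n = Λ ^ n * ρ ^ n := by
      rw [← hΛρ, mul_pow]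
    have hdens : μ (Metric.ball x ρ) ≤ ENNReal.ofReal (2 * Cstar * Λ ^ n * ρ ^ n) := by
      refine (measure_mono (ball_subset_ball hρle)).trans (ih.1.trans ?_)
      rw [hpown]
      exact ENNReal.ofReal_le_ofReal (le_of_eq (by ring))
    have hdens10 : μ (Metric.ball x ρ) ≤ ENNReal.ofReal (10 * Cstar * Λ ^ n * ρ ^ n) := by
      refine hdens.trans (ENNReal.ofReal_le_ofReal ?_)
      have h1 : (0:ℝ) ≤ Λ ^ n * ρ ^ n := by positivity
      nlinarith
    have hdb := hbad ρ hρ0 hρε hdens10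
    rw [hΛρ] at hdb
    constructor
    · -- density invariant
      have h2 : ENNReal.ofReal (2 * Λ ^ d) * μ (Metric.ball x ρ) ≤
          ENNReal.ofReal (2 * Λ ^ d) * ENNReal.ofReal (2 * Cstar * ρ ^ n) := by
        refine (hdb.le.trans ih.1).trans ?_
        rw [← ENNReal.ofReal_mul (by positivity), hpown]
        apply ENNReal.ofReal_le_ofReal
        have hΛnd : Λ ^ n ≤ Λ ^ d := pow_le_pow_right₀ hΛ1.le hnd
        have h5 : Λ ^ n * (2 * Cstar * ρ ^ n) ≤ Λ ^ d * (2 * Cstar * ρ ^ n) :=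
          mul_le_mul_of_nonneg_right hΛnd (by positivity)
        have h6 : (0:ℝ) ≤ Λ ^ d * (2 * Cstar * ρ ^ n) := by positivity
        nlinarith [h5, h6]
      exact (ENNReal.mul_le_mul_iff_right (by simp [ENNReal.ofReal_eq_zero, not_le]; positivity)
        ENNReal.ofReal_ne_top).mp h2
    · -- decay invariant
      have h4 : ENNReal.ofReal ((2 * Λ ^ d) ^ (j + 1)) * μ (Metric.ball x ρ) =
          ENNReal.ofReal ((2 * Λ ^ d) ^ j) * (ENNReal.ofReal (2 * Λ ^ d) * μ (Metric.ball x ρ)) := by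
        rw [pow_succ, ENNReal.ofReal_mul (by positivity), mul_assoc]
      rw [h4]
      calc ENNReal.ofReal ((2 * Λ ^ d) ^ j) * (ENNReal.ofReal (2 * Λ ^ d) * μ (Metric.ball x ρ))
          ≤ ENNReal.ofReal ((2 * Λ ^ d) ^ j) * μ (Metric.ball x (s / Λ ^ j)) :=
            mul_le_mul_right hdb.le _
        _ ≤ μ (Metric.ball x s) := ih.2

/-- Lemma 5.1: if `μ` is a finite Borel measure with
`liminf_{r→0} μ(B(x,r))/r^n ≤ C_*` for every `x` in the support `E`, and `Λ > 2`, then for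
`μ`-a.e. `x ∈ E` there is a sequence `r_k → 0` of positive radii with
`μ(B(x,Λr_k)) ≤ 2Λ^d μ(B(x,r_k))` and `μ(B(x,r_k)) ≤ 10 C_* Λ^n r_k^n`. -/
theorem doubling_scales_with_density_bound (d n : ℕ)
    (μ : Measure (EuclideanSpace ℝ (Fin d))) [IsFiniteMeasure μ]
    (Cstar : ℝ) (hCstar : 0 < Cstar) (Λ : ℝ) (hΛ : 2 < Λ)
    (hlow : ∀ x ∈ measSupp μ,
      liminf (fun r : ℝ => μ (Metric.ball x r) / ENNReal.ofReal (r ^ n))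
        (nhdsWithin 0 (Set.Ioi 0)) ≤ ENNReal.ofReal Cstar) :
    ∀ᵐ x ∂μ, x ∈ measSupp μ →
      ∃ r : ℕ → ℝ, (∀ k, 0 < r k) ∧ Tendsto r atTop (nhds 0) ∧
        (∀ k, μ (Metric.ball x (Λ * r k)) ≤ ENNReal.ofReal (2 * Λ ^ d) * μ (Metric.ball x (r k))) ∧
        (∀ k, μ (Metric.ball x (r k)) ≤ ENNReal.ofReal (10 * Cstar * Λ ^ n * r k ^ n)) := by
  classical
  have hΛ0 : (0:ℝ) < Λ := by linarith
  have hΛ1 : (1:ℝ) < Λ := by linarith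
  have hnull : μ {x : EuclideanSpace ℝ (Fin d) | ∀ δ : ℝ, 0 < δ → ∃ r : ℝ, 0 < r ∧ r < 1 ∧
      μ (Metric.closedBall x (5 * r)) ≤ ENNReal.ofReal (δ * r ^ d)} = 0 :=
    null_of_small_balls μ _ (fun x hx => hx)
  rw [ae_iff]
  refine measure_mono_null ?_ hnull
  intro x hx
  rw [Set.mem_setOf_eq, Classical.not_imp] at hx
  obtain ⟨hxE, hxcon⟩ := hx
  have hsmall := exists_small_scale μ hCstar (hlow x hxE)
  rcases lt_or_ge d n with hdn | hnd
  · -- case n > d : every support point has vanishing d-density along the good scales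
    intro δ hδ
    obtain ⟨s, hs0, hsε, hsμ⟩ := hsmall (min 1 (δ / (2 * Cstar * 6 ^ d))) (by positivity)
    have hs1 : s < 1 := lt_of_lt_of_le hsε (min_le_left _ _)
    have hsδ : s ≤ δ / (2 * Cstar * 6 ^ d) := le_of_lt (lt_of_lt_of_le hsε (min_le_right _ _))
    refine ⟨s / 6, by positivity, by linarith, ?_⟩
    have hsub : Metric.closedBall x (5 * (s / 6)) ⊆ Metric.ball x s :=
      closedBall_subset_ball (by linarith)
    refine (measure_mono hsub).trans (hsμ.trans (ENNReal.ofReal_le_ofReal ?_))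
    have hpow : s ^ n ≤ s * s ^ d := by
      have h1 : s ^ n ≤ s ^ (d + 1) :=
        pow_le_pow_of_le_one hs0.le hs1.le (by omega)
      calc s ^ n ≤ s ^ (d + 1) := h1
        _ = s * s ^ d := by rw [pow_succ]; ring
    have h2 : 2 * Cstar * s ≤ δ / 6 ^ d := by
      rw [le_div_iff₀ (by positivity)]
      rw [le_div_iff₀ (by positivity)] at hsδ
      nlinarith [hsδ]
    calc 2 * Cstar * s ^ n ≤ 2 * Cstar * (s * s ^ d) := by nlinarith
      _ = (2 * Cstar * s) * s ^ d := by ring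
      _ ≤ (δ / 6 ^ d) * s ^ d := by
          have : (0:ℝ) ≤ s ^ d := by positivity
          nlinarith
      _ = δ * (s / 6) ^ d := by rw [div_pow]; ring
  · -- case n ≤ d : use the walk
    have hex : ∃ ε : ℝ, 0 < ε ∧ ∀ ρ : ℝ, 0 < ρ → ρ < ε →
        μ (Metric.ball x ρ) ≤ ENNReal.ofReal (10 * Cstar * Λ ^ n * ρ ^ n) →
        ENNReal.ofReal (2 * Λ ^ d) * μ (Metric.ball x ρ) < μ (Metric.ball x (Λ * ρ)) := by
      by_contra hno
      push_neg at hno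
      apply hxcon
      have hch : ∀ k : ℕ, ∃ ρ : ℝ, 0 < ρ ∧ ρ < 1 / (k + 1) ∧
          (μ (Metric.ball x ρ) ≤ ENNReal.ofReal (10 * Cstar * Λ ^ n * ρ ^ n)) ∧
          μ (Metric.ball x (Λ * ρ)) ≤ ENNReal.ofReal (2 * Λ ^ d) * μ (Metric.ball x ρ) := by
        intro k
        obtain ⟨ρ, hρ0, hρlt, hρd, hρdb⟩ := hno (1 / (k + 1)) (by positivity)
        exact ⟨ρ, hρ0, hρlt, hρd, hρdb⟩
      choose rr h1 h2 h3 h4 using hch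
      refine ⟨rr, h1, ?_, h4, h3⟩
      apply squeeze_zero (fun k => (h1 k).le) (fun k => (h2 k).le)
      exact_mod_cast tendsto_one_div_add_atTop_nhds_zero_nat (𝕜 := ℝ)
    obtain ⟨ε, hε0, hbad⟩ := hex
    obtain ⟨s, hs0, hsε, hsμ⟩ := hsmall (min ε 1) (by positivity)
    have hsε' : s < ε := lt_of_lt_of_le hsε (min_le_left _ _)
    have hs1 : s < 1 := lt_of_lt_of_le hsε (min_le_right _ _)
    have hwalk := walk_decay hnd μ hCstar hΛ hs0 hsε' x hbad hsμ
    intro δ hδ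
    -- choose j large enough
    obtain ⟨j, hj⟩ := pow_unbounded_of_one_lt ((μ Set.univ).toReal * 6 ^ d / (δ * s ^ d))
      (by norm_num : (1:ℝ) < 2)
    set r : ℝ := s / Λ ^ j / 6 with hr
    have hΛj1 : (1:ℝ) ≤ Λ ^ j := one_le_pow₀ hΛ1.le
    have hr0 : 0 < r := by
      apply div_pos (div_pos hs0 (pow_pos hΛ0 _)) (by norm_num)
    have hr1 : r < 1 := by
      have : s / Λ ^ j ≤ s := div_le_self hs0.le hΛj1
      have : r ≤ s / 6 := by
        rw [hr]
        apply div_le_div_of_nonneg_right this (by norm_num)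
      linarith
    refine ⟨r, hr0, hr1, ?_⟩
    have hsub : Metric.closedBall x (5 * r) ⊆ Metric.ball x (s / Λ ^ j) := by
      apply closedBall_subset_ball
      rw [hr]
      have h5 : 0 < s / Λ ^ j := div_pos hs0 (pow_pos hΛ0 _)
      linarith [h5]
    refine (measure_mono hsub).trans ?_
    -- from the walk: ofReal ((2Λ^d)^j) * μ(ball (s/Λ^j)) ≤ μ univ
    have hdecay : ENNReal.ofReal ((2 * Λ ^ d) ^ j) * μ (Metric.ball x (s / Λ ^ j)) ≤ μ Set.univ :=
      (hwalk j).2.trans (measure_mono (Set.subset_univ _))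
    have hMtop : μ Set.univ ≠ ⊤ := measure_ne_top μ _
    have hreal : (μ Set.univ).toReal ≤ δ * r ^ d * (2 * Λ ^ d) ^ j := by
      have hrd : δ * r ^ d * (2 * Λ ^ d) ^ j = δ * s ^ d * 2 ^ j / 6 ^ d := by
        rw [hr]
        have hΛjd : (Λ ^ j) ^ d ≠ 0 := by positivity
        rw [div_pow, div_pow, mul_pow, ← pow_mul, ← pow_mul, mul_comm d j]
        field_simp
      rw [hrd]
      rw [div_lt_iff₀ (by positivity)] at hj
      rw [le_div_iff₀ (by positivity)]
      nlinarith
    have hM : μ Set.univ ≤ ENNReal.ofReal (δ * r ^ d * (2 * Λ ^ d) ^ j) := by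
      rw [← ENNReal.ofReal_toReal hMtop]
      exact ENNReal.ofReal_le_ofReal hreal
    have hfin : ENNReal.ofReal ((2 * Λ ^ d) ^ j) * μ (Metric.ball x (s / Λ ^ j)) ≤
        ENNReal.ofReal ((2 * Λ ^ d) ^ j) * ENNReal.ofReal (δ * r ^ d) := by
      refine hdecay.trans (hM.trans ?_)
      rw [← ENNReal.ofReal_mul (by positivity)]
      exact ENNReal.ofReal_le_ofReal (le_of_eq (by ring))
    exact (ENNReal.mul_le_mul_iff_right (by simp [ENNReal.ofReal_eq_zero, not_le]; positivity)
      ENNReal.ofReal_ne_top).mp hfin
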